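/- Let u : {0,1}^m → ℝ be a monotone function and let s ∈ ℕ. Define u'(S) = min over T ⊆ S with |T| ≤ s of u(S \ T), define M = {S ⊆ [m] : u'(S) ≥ u'([m] \ S)}, and for sets write d(S, M) = min over T ∈ M of the size of the symmetric difference of S and T. Let A ⊆ [m] with complement A̅ = [m] \ A, and suppose u'(A) ≥ u'(A̅) and d(A̅, M) ≤ s. Then there exist R_1 ⊆ A and R_2 ⊆ A̅ with |R_1| ≤ 2s and |R_2| ≤ 2s such that u(A) ≥ u(A̅ \ R_2) and u(A̅) ≥ u(A \ R_1). -/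
import Mathlib


open scoped symmDiff

/-- `truncMin s u S = min_{T ⊆ S, |T| ≤ s} u (S \ T)`: the smallest value of `u` after
removing at most `s` elements from `S`. -/
noncomputable def truncMin {m : ℕ} (s : ℕ) (u : Finset (Fin m) → ℝ)
    (S : Finset (Fin m)) : ℝ :=
  (S.powerset.filter (fun T => T.card ≤ s)).inf'
    ⟨∅, Finset.mem_filter.mpr ⟨Finset.empty_mem_powerset S, by simp⟩⟩
    (fun T => u (S \ T))

lemma truncMin_le {m s : ℕ} (u : Finset (Fin m) → ℝ) {S T : Finset (Fin m)}
    (hT : T ⊆ S) (hc : T.card ≤ s) : truncMin s u S ≤ u (S \ T) :=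
  Finset.inf'_le _ (Finset.mem_filter.mpr ⟨Finset.mem_powerset.mpr hT, hc⟩)

lemma truncMin_exists {m s : ℕ} (u : Finset (Fin m) → ℝ) (S : Finset (Fin m)) :
    ∃ T : Finset (Fin m), T ⊆ S ∧ T.card ≤ s ∧ truncMin s u S = u (S \ T) := by
  obtain ⟨T, hT, hval⟩ := Finset.exists_mem_eq_inf'
    (⟨∅, Finset.mem_filter.mpr ⟨Finset.empty_mem_powerset S, by simp⟩⟩ :
      (S.powerset.filter (fun T => T.card ≤ s)).Nonempty) (fun T => u (S \ T))
  rw [Finset.mem_filter, Finset.mem_powerset] at hT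
  exact ⟨T, hT.1, hT.2, hval⟩

/-- Let `u` be monotone, `s ∈ ℕ`, `u' = truncMin s u`, and
`M = {S : u' S ≥ u' Sᶜ}`. If `A` satisfies `u' A ≥ u' Aᶜ` and `d(Aᶜ, M) ≤ s`
(i.e., some `T ∈ M` has Hamming distance at most `s` from `Aᶜ`), then there are
`R₁ ⊆ A` and `R₂ ⊆ Aᶜ` of size at most `2 s` with `u A ≥ u (Aᶜ \ R₂)` and
`u Aᶜ ≥ u (A \ R₁)`. -/
theorem consensus_halving_from_distance_to_valid_sets (m s : ℕ)
    (u : Finset (Fin m) → ℝ)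
    (hu : ∀ S T : Finset (Fin m), S ⊆ T → u S ≤ u T)
    (A : Finset (Fin m))
    (hA : truncMin s u A ≥ truncMin s u Aᶜ)
    (hdist : ∃ T : Finset (Fin m),
      truncMin s u T ≥ truncMin s u Tᶜ ∧ (Aᶜ ∆ T).card ≤ s) :
    ∃ R₁ R₂ : Finset (Fin m), R₁ ⊆ A ∧ R₂ ⊆ Aᶜ ∧ R₁.card ≤ 2 * s ∧ R₂.card ≤ 2 * s ∧
      u A ≥ u (Aᶜ \ R₂) ∧ u Aᶜ ≥ u (A \ R₁) := by
  obtain ⟨T, hT, hTd⟩ := hdist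
  obtain ⟨T₂, hT₂sub, hT₂c, hT₂val⟩ := truncMin_exists (s := s) u Aᶜ
  obtain ⟨T₃, hT₃sub, hT₃c, hT₃val⟩ := truncMin_exists (s := s) u Tᶜ
  refine ⟨A ∩ (T ∪ T₃), T₂, Finset.inter_subset_left, hT₂sub, ?_, le_trans hT₂c (by omega),
    ?_, ?_⟩
  · -- card bound for R₁
    have h1 : (A ∩ T).card ≤ s := by
      refine le_trans (Finset.card_le_card ?_) hTd
      intro x hx
      rw [Finset.mem_inter] at hx
      simp [Finset.mem_symmDiff, hx.2, Finset.mem_compl, hx.1]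
    have h2 : A ∩ (T ∪ T₃) ⊆ (A ∩ T) ∪ T₃ := by
      intro x hx
      rw [Finset.mem_inter, Finset.mem_union] at hx
      rcases hx.2 with h | h
      · exact Finset.mem_union_left _ (Finset.mem_inter.mpr ⟨hx.1, h⟩)
      · exact Finset.mem_union_right _ h
    calc (A ∩ (T ∪ T₃)).card ≤ ((A ∩ T) ∪ T₃).card := Finset.card_le_card h2
      _ ≤ (A ∩ T).card + T₃.card := Finset.card_union_le _ _
      _ ≤ 2 * s := by omega
  · -- u A ≥ u (Aᶜ \ T₂)
    calc u (Aᶜ \ T₂) = truncMin s u Aᶜ := hT₂val.symm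
      _ ≤ truncMin s u A := hA
      _ ≤ u (A \ ∅) := truncMin_le u (Finset.empty_subset _) (by simp)
      _ = u A := by rw [Finset.sdiff_empty]
  · -- u Aᶜ ≥ u (A \ (A ∩ (T ∪ T₃)))
    have hTA : T \ Aᶜ ⊆ Aᶜ ∆ T := by
      intro x hx
      rw [Finset.mem_sdiff] at hx
      simp [Finset.mem_symmDiff, hx.1, hx.2]
    have h1 : truncMin s u T ≤ u (T \ (T \ Aᶜ)) :=
      truncMin_le u (Finset.sdiff_subset) (le_trans (Finset.card_le_card hTA) hTd)
    have h2 : u (T \ (T \ Aᶜ)) ≤ u Aᶜ := by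
      refine hu _ _ ?_
      intro x hx
      rw [Finset.mem_sdiff, Finset.mem_sdiff] at hx
      by_contra hc
      exact hx.2 ⟨hx.1, hc⟩
    have h3 : A \ (A ∩ (T ∪ T₃)) ⊆ Tᶜ \ T₃ := by
      intro x hx
      rw [Finset.mem_sdiff, Finset.mem_inter, Finset.mem_union] at hx
      rw [Finset.mem_sdiff, Finset.mem_compl]
      push_neg at hx
      exact ⟨(hx.2 hx.1).1, (hx.2 hx.1).2⟩
    calc u (A \ (A ∩ (T ∪ T₃))) ≤ u (Tᶜ \ T₃) := hu _ _ h3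
      _ = truncMin s u Tᶜ := hT₃val.symm
      _ ≤ truncMin s u T := hT
      _ ≤ u (T \ (T \ Aᶜ)) := h1
      _ ≤ u Aᶜ := h2
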